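/- arXiv:2011.01090 — 2 statements merged into one kernel-verified Lean document; each statement's English description precedes it below -/
import Mathlib

section
/- With the unbiased estimator l̃_k(t) = M · (l_k(t) / Σ_{A : k ∈ A} P_A(t)) · 1{k = A₁(t)}, and meta-arm loss estimator l̃_A(t) = Σ_{k ∈ A} l̃_k(t), the conditional second moment satisfies E[(l̃_A(t))² | P(t)] = M · Σ_{k ∈ A} (l_k(t))² / (Σ_{B : k ∈ B ∈ 𝒦} P_B(t)). -/
open Finset

/-- Conditional second moment of the meta-arm loss estimator:
`E[(l̃_A)² | P] = M · ∑_{k ∈ A} l_k² / (∑_{B ∋ k} P_B)`, where the random draw is a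
meta-arm `B` with probability `P B` and `b` uniform in `B`, and
`l̃_k = M · l_k / (∑_{B' ∋ k} P_{B'}) · 1{k = b}`. -/
theorem loss_estimator_second_moment
    (K M : ℕ) (hM : 1 ≤ M) (hMK : M ≤ K)
    (P : Finset (Fin K) → ℝ) (l : Fin K → ℝ)
    (hPnonneg : ∀ A, 0 ≤ P A)
    (hPsum : ∑ A ∈ Finset.powersetCard M (univ : Finset (Fin K)), P A = 1)
    (hl : ∀ k, 0 ≤ l k ∧ l k ≤ 1)
    (hpos : ∀ k : Fin K, 0 < ∑ B ∈ (Finset.powersetCard M (univ : Finset (Fin K))).filter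
      (fun B => k ∈ B), P B)
    (A : Finset (Fin K)) (hA : A ∈ Finset.powersetCard M (univ : Finset (Fin K))) :
    ∑ B ∈ Finset.powersetCard M (univ : Finset (Fin K)), P B *
      ∑ b ∈ B, (1 / (M : ℝ)) *
        (∑ k ∈ A, (M : ℝ) * l k /
          (∑ B' ∈ (Finset.powersetCard M (univ : Finset (Fin K))).filter
            (fun B' => k ∈ B'), P B') * (if k = b then 1 else 0)) ^ 2
    = (M : ℝ) * ∑ k ∈ A, (l k) ^ 2 /
        (∑ B ∈ (Finset.powersetCard M (univ : Finset (Fin K))).filter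
          (fun B => k ∈ B), P B) := by
  set 𝒦 := Finset.powersetCard M (univ : Finset (Fin K)) with h𝒦
  set S : Fin K → ℝ := fun k => ∑ B ∈ 𝒦.filter (fun B => k ∈ B), P B with hS
  have hSpos : ∀ k, 0 < S k := hpos
  have hMne : (M : ℝ) ≠ 0 := by positivity
  -- Step 1: collapse the inner sum over k using the indicator.
  have step1 : ∀ b : Fin K,
      (∑ k ∈ A, (M : ℝ) * l k / S k * (if k = b then 1 else 0))
        = if b ∈ A then (M : ℝ) * l b / S b else 0 := by
    intro b
    rw [← Finset.sum_ite_eq' A b (fun k => (M : ℝ) * l k / S k)]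
    refine Finset.sum_congr rfl fun k _ => ?_
    by_cases h : k = b <;> simp [h]
  calc
    ∑ B ∈ 𝒦, P B * ∑ b ∈ B, (1 / (M : ℝ)) *
        (∑ k ∈ A, (M : ℝ) * l k / S k * (if k = b then 1 else 0)) ^ 2
      = ∑ B ∈ 𝒦, ∑ b ∈ A, (if b ∈ B then P B * ((1 / (M : ℝ)) * ((M : ℝ) * l b / S b) ^ 2) else 0) := by
        refine Finset.sum_congr rfl fun B _ => ?_
        rw [Finset.mul_sum]
        rw [show (∑ b ∈ B, P B * ((1 / (M : ℝ)) *
            (∑ k ∈ A, (M : ℝ) * l k / S k * (if k = b then 1 else 0)) ^ 2))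
          = ∑ b ∈ B, (if b ∈ A then P B * ((1 / (M : ℝ)) * ((M : ℝ) * l b / S b) ^ 2) else 0) from
          Finset.sum_congr rfl fun b _ => by
            rw [step1 b]; by_cases h : b ∈ A <;> simp [h]]
        rw [Finset.sum_ite_mem, Finset.sum_ite_mem, Finset.inter_comm]
    _ = ∑ b ∈ A, (1 / (M : ℝ)) * ((M : ℝ) * l b / S b) ^ 2 * S b := by
        rw [Finset.sum_comm]
        refine Finset.sum_congr rfl fun b _ => ?_
        rw [hS]
        simp only [← Finset.sum_filter]
        rw [← Finset.sum_mul]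
        ring
    _ = (M : ℝ) * ∑ k ∈ A, (l k) ^ 2 / S k := by
        rw [Finset.mul_sum]
        refine Finset.sum_congr rfl fun k _ => ?_
        have hk := (hSpos k).ne'
        field_simp
end

section
/- Suppose an adversary has a total budget of at most V ones on each arm (global attackability), communication uses codewords requiring at least k corrupted bits for a successful attack, there are M players, and each successful attack on a communication phase causes an exploration loss of at most M·τ. Then the total exploration loss caused by failed communications is at most M²·V·τ/k. -/
open Finset

/-- Global-attackability error regret: if each of `M` communication arms has
attack budget at most `V` ones, each successful attack consumes at least `k` ones,
and each successful attack causes at most `M·τ` exploration loss, then the total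
exploration loss caused by failed communications is at most `M²·V·τ/k`. -/
theorem global_attack_error_regret
    (M V k τ : ℕ) (hk : 1 ≤ k)
    (attacks budget : Fin M → ℕ)
    (hbudget : ∀ m, budget m ≤ V)
    (hcost : ∀ m, k * attacks m ≤ budget m) :
    ((∑ m : Fin M, attacks m : ℕ) : ℝ) * ((M : ℝ) * τ)
      ≤ (M : ℝ) ^ 2 * V * τ / k := by
  have hknat : k * ∑ m : Fin M, attacks m ≤ M * V := by
    rw [Finset.mul_sum]
    calc ∑ m : Fin M, k * attacks m ≤ ∑ m : Fin M, V := by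
          exact Finset.sum_le_sum fun m _ => (hcost m).trans (hbudget m)
      _ = M * V := by simp [mul_comm]
  have hkpos : (0:ℝ) < k := by exact_mod_cast hk
  have h1 : ((∑ m : Fin M, attacks m : ℕ) : ℝ) ≤ (M : ℝ) * V / k := by
    rw [le_div_iff₀ hkpos]
    calc ((∑ m : Fin M, attacks m : ℕ) : ℝ) * k = ((k * ∑ m : Fin M, attacks m : ℕ) : ℝ) := by
          push_cast; ring
      _ ≤ ((M * V : ℕ) : ℝ) := by exact_mod_cast hknat
      _ = (M : ℝ) * V := by push_cast; ring
  have h2 : (0:ℝ) ≤ (M : ℝ) * τ := by positivity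
  calc ((∑ m : Fin M, attacks m : ℕ) : ℝ) * ((M : ℝ) * τ)
      ≤ ((M : ℝ) * V / k) * ((M : ℝ) * τ) := mul_le_mul_of_nonneg_right h1 h2
    _ = (M : ℝ) ^ 2 * V * τ / k := by ring
end
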